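/- arXiv:1712.02569 — 2 statements merged into one kernel-verified Lean document; each statement's English description precedes it below -/
import Mathlib

section
/- For every set B ⊆ ω₁ × ω₁ that does not belong to the σ-ideal 𝓘, the space 𝒳_B = {A ∈ 𝒳 : A ⊆ B} is not bisequential. -/
open Cardinal Filter Topology Set

noncomputable section
open Classical

/-- `ω₁`, the first uncountable ordinal, viewed as the linearly ordered type of
all countable ordinals. -/
abbrev Omega1 : Type 1 := ↥(Set.Iio (Cardinal.aleph 1).ord)

/-- The vertical section `A_α = {β : (α, β) ∈ A}`. -/
def vertSection (A : Set (Omega1 × Omega1)) (α : Omega1) : Set Omega1 :=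
  {β | (α, β) ∈ A}

/-- The horizontal section `A^α = {γ : (γ, α) ∈ A}`. -/
def horSection (A : Set (Omega1 × Omega1)) (α : Omega1) : Set Omega1 :=
  {γ | (γ, α) ∈ A}

/-- Membership in the σ-ideal `𝓘`: for all but countably many `α ∈ ω₁` both the
vertical and the horizontal section of `A` at `α` are countable. -/
def MemIdealI (A : Set (Omega1 × Omega1)) : Prop :=
  {α : Omega1 | ¬ ((vertSection A α).Countable ∧ (horSection A α).Countable)}.Countable

/-- `F` is a finite graph of a strictly decreasing partial function: `F` is finite,
contains no two pairs with the same first coordinate, and whenever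
`(α,β), (α',β') ∈ F` with `α < α'` then `β > β'`. -/
def IsDecGraph {T : Type*} [LinearOrder T] (F : Set (T × T)) : Prop :=
  F.Finite ∧ (∀ p ∈ F, ∀ q ∈ F, p.1 = q.1 → p = q) ∧
    (∀ p ∈ F, ∀ q ∈ F, p.1 < q.1 → q.2 < p.2)

/-- The characteristic function of a set, with values in `{0,1} = Bool`. -/
def chi {T : Type*} (A : Set T) : T → Bool := fun x => if x ∈ A then true else false

/-- The space `𝒳` (over a linear order `T`) of characteristic functions of finite
graphs of strictly decreasing partial functions on `T`, viewed as a subset of the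
product space `{0,1}^(T × T)`; it carries the subspace topology. -/
def XSpace (T : Type*) [LinearOrder T] : Set ((T × T) → Bool) :=
  {f | ∃ F : Set (T × T), IsDecGraph F ∧ f = chi F}

/-- The space `𝒳_B = {A ∈ 𝒳 : A ⊆ B}`, as a subset of `{0,1}^(ω₁ × ω₁)`. -/
def XSpaceIn (B : Set (Omega1 × Omega1)) : Set ((Omega1 × Omega1) → Bool) :=
  {f | ∃ F : Set (Omega1 × Omega1), IsDecGraph F ∧ F ⊆ B ∧ f = chi F}

/-- The support of a point of `{0,1}^T`: the set of which it is the
characteristic function. -/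
def supp {T : Type*} (f : T → Bool) : Set T := {x | f x = true}

/-- A topological space `X` is bisequential if for every ultrafilter `𝒰` on `X`
converging to a point `x` (every neighbourhood of `x` belongs to `𝒰`) there is a
decreasing sequence `U₀ ⊇ U₁ ⊇ ⋯` of members of `𝒰` converging to `x` (every
neighbourhood of `x` contains `Uₙ` for all sufficiently large `n`). -/
def Bisequential (X : Type*) [TopologicalSpace X] : Prop :=
  ∀ (𝒰 : Ultrafilter X) (x : X), (𝒰 : Filter X) ≤ 𝓝 x →
    ∃ U : ℕ → Set X, (∀ n, U n ∈ 𝒰) ∧ (∀ n, U (n + 1) ⊆ U n) ∧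
      ∀ V ∈ 𝓝 x, ∀ᶠ n in atTop, U n ⊆ V

/-! ### Auxiliary lemmas about `ω₁` -/

lemma countable_Iio_ord {o : Ordinal} (h : o < (Cardinal.aleph 1).ord) :
    (Set.Iio o).Countable := by
  rw [Set.countable_coe_iff.symm]
  have e : Set.Iio o ≃ o.ToType := (Ordinal.ToType.mk).toEquiv
  have hc : Countable o.ToType := by
    rw [← Cardinal.mk_le_aleph0_iff, Cardinal.mk_toType]
    have := (Cardinal.lt_ord.mp h)
    rwa [← Cardinal.succ_aleph0, Order.lt_succ_iff] at this
  exact e.countable_iff.mpr hc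

lemma omega1_isLimit : Order.IsSuccLimit (Cardinal.aleph 1).ord :=
  Cardinal.isSuccLimit_ord (Cardinal.aleph0_le_aleph 1)

lemma countable_Iic_o1 (γ : Omega1) : (Set.Iic γ).Countable := by
  have h1 : (Set.Iic γ.1).Countable := by
    have : Set.Iic γ.1 = Set.Iio (γ.1 + 1) := by ext x; simp [Order.lt_succ_iff]
    rw [this]
    exact countable_Iio_ord (omega1_isLimit.succ_lt γ.2)
  have : Set.Iic γ = Subtype.val ⁻¹' Set.Iic γ.1 := by ext x; simp [Subtype.coe_le_coe]
  rw [this]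
  exact h1.preimage Subtype.coe_injective

lemma exists_gt_o1 {S T : Set Omega1} (hS : ¬ S.Countable) (hT : T.Countable) (γ : Omega1) :
    ∃ x, x ∈ S ∧ x ∉ T ∧ γ < x := by
  by_contra h
  push_neg at h
  apply hS
  have hsub : S ⊆ T ∪ Set.Iic γ := by
    intro x hx
    rcases Classical.em (x ∈ T) with h1 | h1
    · exact Or.inl h1
    · exact Or.inr (not_lt.mp (fun hlt => absurd (h x hx h1) (not_le.mpr hlt)))
  exact (hT.union (countable_Iic_o1 γ)).mono hsub

/-- Some element of `ω₁`. -/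
def o1zero : Omega1 :=
  ⟨0, by
    rw [Set.mem_Iio, Cardinal.lt_ord]
    simpa using Cardinal.aleph0_pos.trans Cardinal.aleph0_lt_aleph_one⟩

/-! ### Auxiliary lemmas about the ideal `𝓘` -/

lemma memIdealI_mono {A A' : Set (Omega1 × Omega1)} (h : A ⊆ A') (hA' : MemIdealI A') :
    MemIdealI A := by
  refine Set.Countable.mono ?_ hA'
  intro α hα
  simp only [Set.mem_setOf_eq] at hα ⊢
  intro hc
  exact hα ⟨hc.1.mono (fun β hβ => h hβ), hc.2.mono (fun β hβ => h hβ)⟩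

lemma memIdealI_iUnion {A : ℕ → Set (Omega1 × Omega1)} (h : ∀ n, MemIdealI (A n)) :
    MemIdealI (⋃ n, A n) := by
  have hsub : {α : Omega1 |
        ¬ ((vertSection (⋃ n, A n) α).Countable ∧ (horSection (⋃ n, A n) α).Countable)}
      ⊆ ⋃ n, {α : Omega1 |
        ¬ ((vertSection (A n) α).Countable ∧ (horSection (A n) α).Countable)} := by
    intro α hα
    by_contra hc
    simp only [Set.mem_iUnion, Set.mem_setOf_eq, not_exists, not_not] at hc
    apply hα
    have hv : vertSection (⋃ n, A n) α = ⋃ n, vertSection (A n) α := by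
      ext β; simp [vertSection]
    have hh : horSection (⋃ n, A n) α = ⋃ n, horSection (A n) α := by
      ext β; simp [horSection]
    exact ⟨hv ▸ Set.countable_iUnion (fun n => (hc n).1),
      hh ▸ Set.countable_iUnion (fun n => (hc n).2)⟩
  exact (Set.countable_iUnion (fun n => h n)).mono hsub

/-! ### The chain construction -/

lemma chain_lemma (D : Set (Omega1 × Omega1)) (hhor : ∀ β, (horSection D β).Countable)
    (P : Set (Omega1 × Omega1)) (hP : P.Finite)
    {𝒲 : Set (Set (Omega1 × Omega1))} (h𝒲fin : 𝒲.Finite) :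
    (∀ W ∈ 𝒲, ¬ MemIdealI (W ∩ D)) → ∀ γ : Omega1,
    ∃ F : Set (Omega1 × Omega1), IsDecGraph F ∧ F ⊆ D ∧ (∀ p ∈ F, p ∉ P) ∧
      (∀ W ∈ 𝒲, (F ∩ W).Nonempty) ∧ (∀ p ∈ F, γ < p.1 ∧ γ < p.2) := by
  refine Set.Finite.induction_on _ h𝒲fin ?_ ?_
  · intro _ γ
    exact ⟨∅, ⟨Set.finite_empty, by simp, by simp⟩, by simp, by simp, by simp, by simp⟩
  · rintro W 𝒲' hWnot h𝒲'fin IH hall γ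
    have hW : ¬ MemIdealI (W ∩ D) := hall W (Set.mem_insert _ _)
    set S := {α : Omega1 | ¬ (vertSection (W ∩ D) α).Countable} with hSdef
    have hsubS : {α : Omega1 | ¬ ((vertSection (W ∩ D) α).Countable ∧
        (horSection (W ∩ D) α).Countable)} ⊆ S := by
      intro α hα hvc
      exact hα ⟨hvc, (hhor α).mono (fun x hx => hx.2)⟩
    have hS : ¬ S.Countable := fun hc => hW (hc.mono hsubS)
    obtain ⟨α, hαS, -, hγα⟩ := exists_gt_o1 hS Set.countable_empty γ
    obtain ⟨F', hF'dec, hF'D, hF'P, hF'hit, hF'bd⟩ :=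
      IH (fun W' hW' => hall W' (Set.mem_insert_of_mem _ hW')) α
    set T : Set Omega1 :=
      (Set.Iic γ ∪ ⋃ p ∈ F', Set.Iic p.2) ∪ {b | (α, b) ∈ P} with hTdef
    have hT : T.Countable := by
      refine Set.Countable.union (Set.Countable.union (countable_Iic_o1 γ) ?_) ?_
      · exact Set.Countable.biUnion hF'dec.1.countable (fun p _ => countable_Iic_o1 p.2)
      · refine ((hP.image Prod.snd).countable).mono ?_
        intro b hb
        exact ⟨(α, b), hb, rfl⟩
    obtain ⟨β, hβS, hβT, -⟩ := exists_gt_o1 hαS hT γ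
    have hpair : (α, β) ∈ W ∩ D := hβS
    have hβγ : γ < β :=
      lt_of_not_ge (fun hle => hβT (Or.inl (Or.inl hle)))
    have hβF' : ∀ p ∈ F', p.2 < β := by
      intro p hp
      refine lt_of_not_ge (fun hle => hβT (Or.inl (Or.inr ?_)))
      exact Set.mem_biUnion hp hle
    have hβP : (α, β) ∉ P := fun hmem => hβT (Or.inr hmem)
    refine ⟨insert (α, β) F', ⟨hF'dec.1.insert _, ?_, ?_⟩, ?_, ?_, ?_, ?_⟩
    · rintro p hp q hq h1
      rcases Set.mem_insert_iff.mp hp with rfl | hp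
      · rcases Set.mem_insert_iff.mp hq with rfl | hq
        · rfl
        · exact absurd h1 (ne_of_lt (hF'bd q hq).1)
      · rcases Set.mem_insert_iff.mp hq with rfl | hq
        · exact absurd h1.symm (ne_of_lt (hF'bd p hp).1)
        · exact hF'dec.2.1 p hp q hq h1
    · rintro p hp q hq hlt
      rcases Set.mem_insert_iff.mp hp with rfl | hp
      · rcases Set.mem_insert_iff.mp hq with rfl | hq
        · exact absurd hlt (lt_irrefl _)
        · exact hβF' q hq
      · rcases Set.mem_insert_iff.mp hq with rfl | hq
        · exact absurd hlt (not_lt.mpr (le_of_lt (hF'bd p hp).1))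
        · exact hF'dec.2.2 p hp q hq hlt
    · rintro p hp
      rcases Set.mem_insert_iff.mp hp with rfl | hp
      · exact hpair.2
      · exact hF'D hp
    · rintro p hp
      rcases Set.mem_insert_iff.mp hp with rfl | hp
      · exact hβP
      · exact hF'P p hp
    · intro W' hW'
      rcases Set.mem_insert_iff.mp hW' with rfl | hW'
      · exact ⟨(α, β), Set.mem_insert _ _, hpair.1⟩
      · obtain ⟨q, hq1, hq2⟩ := hF'hit W' hW'
        exact ⟨q, Set.mem_insert_of_mem _ hq1, hq2⟩
    · intro p hp
      rcases Set.mem_insert_iff.mp hp with rfl | hp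
      · exact ⟨hγα, hβγ⟩
      · exact ⟨hγα.trans (hF'bd p hp).1, hγα.trans (hF'bd p hp).2⟩

/-! ### chi basics -/

lemma chi_true {T : Type*} {A : Set T} {x : T} : chi A x = true ↔ x ∈ A := by
  simp [chi]

lemma chi_false {T : Type*} {A : Set T} {x : T} : chi A x = false ↔ x ∉ A := by
  simp [chi]

/-! ### The key lemma -/

lemma key_lemma (B D : Set (Omega1 × Omega1)) (hDB : D ⊆ B) (hD : ¬ MemIdealI D)
    (hhor : ∀ β, (horSection D β).Countable) : ¬ Bisequential ↥(XSpaceIn B) := by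
  intro hbis
  have hx0 : chi (∅ : Set (Omega1 × Omega1)) ∈ XSpaceIn B :=
    ⟨∅, ⟨Set.finite_empty, by simp, by simp⟩, Set.empty_subset _, rfl⟩
  set x₀ : ↥(XSpaceIn B) := ⟨chi ∅, hx0⟩ with hx₀def
  set Sp : Omega1 × Omega1 → Set ↥(XSpaceIn B) := fun p => {f | f.1 p = false} with hSpdef
  set Hw : Set (Omega1 × Omega1) → Set ↥(XSpaceIn B) :=
    fun W => {f | ∃ q ∈ W, f.1 q = true} with hHwdef
  set g : Set (Set ↥(XSpaceIn B)) :=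
    (Set.range Sp) ∪ {s | ∃ W, ¬ MemIdealI (W ∩ D) ∧ s = Hw W} with hgdef
  have elem : ∀ F : Set (Omega1 × Omega1), IsDecGraph F → F ⊆ D → chi F ∈ XSpaceIn B :=
    fun F h1 h2 => ⟨F, h1, h2.trans hDB, rfl⟩
  -- finite intersection property
  have key2 : ∀ t : Set (Set ↥(XSpaceIn B)), t.Finite → t ⊆ g →
      ∃ (P : Set (Omega1 × Omega1)) (𝒲 : Set (Set (Omega1 × Omega1))),
        P.Finite ∧ 𝒲.Finite ∧ (∀ W ∈ 𝒲, ¬ MemIdealI (W ∩ D)) ∧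
        ((⋂ p ∈ P, Sp p) ∩ (⋂ W ∈ 𝒲, Hw W)) ⊆ ⋂₀ t := by
    intro t htfin
    refine Set.Finite.induction_on _ htfin ?_ ?_
    · intro _
      exact ⟨∅, ∅, Set.finite_empty, Set.finite_empty, by simp, by simp⟩
    · rintro s t' hsnot ht'fin IH hsub
      obtain ⟨P, 𝒲, hPf, h𝒲f, h𝒲, hsub'⟩ := IH (fun x hx => hsub (Set.mem_insert_of_mem _ hx))
      rcases hsub (Set.mem_insert _ _) with ⟨p, rfl⟩ | ⟨W, hWmem, rfl⟩
      · refine ⟨insert p P, 𝒲, hPf.insert _, h𝒲f, h𝒲, ?_⟩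
        rintro f ⟨hf1, hf2⟩
        rw [Set.biInter_insert] at hf1
        rw [Set.sInter_insert]
        exact ⟨hf1.1, hsub' ⟨hf1.2, hf2⟩⟩
      · refine ⟨P, insert W 𝒲, hPf, h𝒲f.insert _, ?_, ?_⟩
        · intro W' hW'
          rcases Set.mem_insert_iff.mp hW' with rfl | hW'
          · exact hWmem
          · exact h𝒲 W' hW'
        · rintro f ⟨hf1, hf2⟩
          rw [Set.biInter_insert] at hf2
          rw [Set.sInter_insert]
          exact ⟨hf2.1, hsub' ⟨hf1, hf2.2⟩⟩
  have hfip : ∀ t ⊆ g, t.Finite → (⋂₀ t).Nonempty := by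
    intro t htg htfin
    obtain ⟨P, 𝒲, hPf, h𝒲f, h𝒲, hsub⟩ := key2 t htfin htg
    obtain ⟨F, hFdec, hFD, hFP, hFhit, -⟩ := chain_lemma D hhor P hPf h𝒲f h𝒲 o1zero
    refine ⟨⟨chi F, elem F hFdec hFD⟩, hsub ⟨?_, ?_⟩⟩
    · refine Set.mem_biInter (fun p hp => ?_)
      show chi F p = false
      exact chi_false.mpr (fun hpF => hFP p hpF hp)
    · refine Set.mem_biInter (fun W hW => ?_)
      obtain ⟨q, hqF, hqW⟩ := hFhit W hW
      exact ⟨q, hqW, chi_true.mpr hqF⟩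
  have hne : (Filter.generate g).NeBot := Filter.generate_neBot_iff.mpr hfip
  let 𝒰 : Ultrafilter ↥(XSpaceIn B) := @Ultrafilter.of _ (Filter.generate g) hne
  have h𝒰g : ∀ s ∈ g, s ∈ 𝒰 := fun s hs =>
    (@Ultrafilter.of_le _ (Filter.generate g) hne) (Filter.mem_generate_of_mem hs)
  -- the ultrafilter converges to x₀
  have hconv : (𝒰 : Filter ↥(XSpaceIn B)) ≤ 𝓝 x₀ := by
    rw [nhds_subtype]
    rw [← Filter.map_le_iff_le_comap]
    have : Filter.Tendsto (Subtype.val) (𝒰 : Filter ↥(XSpaceIn B))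
        (𝓝 (chi (∅ : Set (Omega1 × Omega1)))) := by
      rw [tendsto_pi_nhds]
      intro p
      have hchi : chi (∅ : Set (Omega1 × Omega1)) p = false := chi_false.mpr (Set.notMem_empty p)
      rw [hchi, show (𝓝 (false : Bool)) = pure false from congrFun (nhds_discrete Bool) false]
      rw [Filter.tendsto_pure]
      exact h𝒰g (Sp p) (Or.inl ⟨p, rfl⟩)
    exact this
  obtain ⟨U, hU, -, hUconv⟩ := hbis 𝒰 x₀ hconv
  set Wn : ℕ → Set (Omega1 × Omega1) := fun n => {q | ∀ f ∈ U n, f.1 q = false} with hWndef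
  have hWn : ∀ q : Omega1 × Omega1, ∃ n, q ∈ Wn n := by
    intro q
    have hop : IsOpen {f : ↥(XSpaceIn B) | f.1 q = false} := by
      have heq : {f : ↥(XSpaceIn B) | f.1 q = false} =
          (fun f : ↥(XSpaceIn B) => f.1 q) ⁻¹' {false} := rfl
      rw [heq]
      exact (isOpen_discrete _).preimage ((continuous_apply q).comp continuous_subtype_val)
    have hmem : {f : ↥(XSpaceIn B) | f.1 q = false} ∈ 𝓝 x₀ :=
      hop.mem_nhds (chi_false.mpr (Set.notMem_empty q))
    obtain ⟨n, hn⟩ := (hUconv _ hmem).exists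
    exact ⟨n, fun f hf => hn hf⟩
  by_cases hcase : ∀ n, MemIdealI (Wn n ∩ D)
  · apply hD
    have hsub : D ⊆ ⋃ n, (Wn n ∩ D) := by
      intro q hq
      obtain ⟨n, hn⟩ := hWn q
      exact Set.mem_iUnion.mpr ⟨n, hn, hq⟩
    exact memIdealI_mono hsub (memIdealI_iUnion hcase)
  · push_neg at hcase
    obtain ⟨n, hn⟩ := hcase
    have h1 : Hw (Wn n) ∈ 𝒰 := h𝒰g _ (Or.inr ⟨Wn n, hn, rfl⟩)
    have h2 : U n ∈ 𝒰 := hU n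
    obtain ⟨f, hfH, hfU⟩ := 𝒰.nonempty_of_mem (Filter.inter_mem h1 h2)
    obtain ⟨q, hqW, hq⟩ := hfH
    have := hqW f hfU
    rw [hq] at this
    exact Bool.noConfusion this

/-! ### Transfer along a homeomorphism -/

lemma bisequential_of_homeo {X Y : Type*} [TopologicalSpace X] [TopologicalSpace Y]
    (e : X ≃ₜ Y) (h : Bisequential X) : Bisequential Y := by
  intro 𝒰 y hle
  have hle' : (Ultrafilter.map e.symm 𝒰 : Filter X) ≤ 𝓝 (e.symm y) := by
    calc (Ultrafilter.map e.symm 𝒰 : Filter X) = Filter.map e.symm (𝒰 : Filter Y) := rfl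
      _ ≤ Filter.map e.symm (𝓝 y) := Filter.map_mono hle
      _ ≤ 𝓝 (e.symm y) := e.symm.continuous.tendsto y
  obtain ⟨U, hU, hdec, hconv⟩ := h (Ultrafilter.map e.symm 𝒰) (e.symm y) hle'
  refine ⟨fun n => e.symm ⁻¹' (U n), fun n => Ultrafilter.mem_map.mp (hU n),
    fun n => Set.preimage_mono (hdec n), ?_⟩
  intro V hV
  have hV' : e ⁻¹' V ∈ 𝓝 (e.symm y) := by
    have ht : Filter.Tendsto e (𝓝 (e.symm y)) (𝓝 (e (e.symm y))) := e.continuous.tendsto _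
    rw [e.apply_symm_apply] at ht
    exact ht hV
  filter_upwards [hconv _ hV'] with n hn
  intro x hx
  have hmem := hn hx
  rwa [Set.mem_preimage, e.apply_symm_apply] at hmem

/-! ### Swapping coordinates -/

lemma IsDecGraph.snd_eq {T : Type*} [LinearOrder T] {F : Set (T × T)} (h : IsDecGraph F)
    {p q : T × T} (hp : p ∈ F) (hq : q ∈ F) (h2 : p.2 = q.2) : p = q := by
  rcases lt_trichotomy p.1 q.1 with hlt | heq | hlt
  · exact absurd h2 (ne_of_gt (h.2.2 p hp q hq hlt))
  · exact h.2.1 p hp q hq heq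
  · exact absurd h2.symm (ne_of_gt (h.2.2 q hq p hp hlt))

lemma IsDecGraph.swapPre {T : Type*} [LinearOrder T] {F : Set (T × T)} (h : IsDecGraph F) :
    IsDecGraph (Prod.swap ⁻¹' F) := by
  refine ⟨h.1.preimage Prod.swap_injective.injOn, ?_, ?_⟩
  · intro p hp q hq h1
    have h2 : (Prod.swap p).2 = (Prod.swap q).2 := h1
    have := h.snd_eq hp hq h2
    exact Prod.swap_injective this
  · intro p hp q hq hlt
    have hlt' : (Prod.swap p).2 < (Prod.swap q).2 := hlt
    rcases lt_trichotomy (Prod.swap q).1 (Prod.swap p).1 with h3 | h3 | h3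
    · exact h3
    · have he : q = p := Prod.swap_injective (h.2.1 _ hq _ hp h3)
      rw [he] at hlt
      exact absurd hlt (lt_irrefl _)
    · exact absurd hlt' (not_lt.mpr (le_of_lt (h.2.2 _ hp _ hq h3)))

lemma chi_swap {F : Set (Omega1 × Omega1)} (p : Omega1 × Omega1) :
    chi F (Prod.swap p) = chi (Prod.swap ⁻¹' F) p := by
  by_cases h : Prod.swap p ∈ F <;> simp [chi, h, Set.mem_preimage]

/-- Swapping coordinates gives a homeomorphism `𝒳_B ≃ₜ 𝒳_{swap⁻¹ B}`. -/
def swapHomeo (B : Set (Omega1 × Omega1)) :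
    ↥(XSpaceIn B) ≃ₜ ↥(XSpaceIn (Prod.swap ⁻¹' B)) where
  toFun f := ⟨fun p => f.1 (Prod.swap p), by
    obtain ⟨F, h1, h2, h3⟩ := f.2
    refine ⟨Prod.swap ⁻¹' F, h1.swapPre, fun p hp => h2 hp, ?_⟩
    funext p
    rw [h3]
    exact chi_swap p⟩
  invFun f := ⟨fun p => f.1 (Prod.swap p), by
    obtain ⟨F, h1, h2, h3⟩ := f.2
    refine ⟨Prod.swap ⁻¹' F, h1.swapPre, ?_, ?_⟩
    · intro p hp
      have : Prod.swap p ∈ Prod.swap ⁻¹' B := h2 hp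
      rwa [Set.mem_preimage, Prod.swap_swap] at this
    · funext p
      rw [h3]
      exact chi_swap p⟩
  left_inv f := by
    apply Subtype.ext
    funext p
    simp [Prod.swap_swap]
  right_inv f := by
    apply Subtype.ext
    funext p
    simp [Prod.swap_swap]
  continuous_toFun := by
    apply Continuous.subtype_mk
    exact continuous_pi fun p => (continuous_apply (Prod.swap p)).comp continuous_subtype_val
  continuous_invFun := by
    apply Continuous.subtype_mk
    exact continuous_pi fun p => (continuous_apply (Prod.swap p)).comp continuous_subtype_val

/-! ### Main theorem -/

lemma vertical_case (B : Set (Omega1 × Omega1))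
    (hS : ¬ ({α : Omega1 | ¬ (vertSection B α).Countable}).Countable) :
    ¬ Bisequential ↥(XSpaceIn B) := by
  apply key_lemma B {p : Omega1 × Omega1 | p ∈ B ∧ p.1 < p.2 ∧ ¬ (vertSection B p.1).Countable}
  · exact fun p hp => hp.1
  · intro hcon
    apply hS
    refine Set.Countable.mono ?_ hcon
    intro α hα
    simp only [Set.mem_setOf_eq] at hα ⊢
    rintro ⟨hvc, -⟩
    apply hα
    have hsub : vertSection B α ⊆
        vertSection {p : Omega1 × Omega1 | p ∈ B ∧ p.1 < p.2 ∧
          ¬ (vertSection B p.1).Countable} α ∪ Set.Iic α := by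
      intro β hβ
      rcases le_or_gt β α with h | h
      · exact Or.inr h
      · exact Or.inl ⟨hβ, h, hα⟩
    exact (hvc.union (countable_Iic_o1 α)).mono hsub
  · intro β
    refine (countable_Iic_o1 β).mono ?_
    intro x hx
    exact le_of_lt hx.2.1

/-- For any `B ⊆ ω₁ × ω₁` not in the σ-ideal `𝓘`, the space `𝒳_B` is not bisequential. -/
theorem XSpaceIn_not_bisequential (B : Set (Omega1 × Omega1)) (hB : ¬ MemIdealI B) :
    ¬ Bisequential ↥(XSpaceIn B) := by
  have hunion : ¬ ({α : Omega1 | ¬ (vertSection B α).Countable} ∪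
      {α : Omega1 | ¬ (horSection B α).Countable}).Countable := by
    intro hc
    apply hB
    refine hc.mono ?_
    intro α hα
    simp only [Set.mem_setOf_eq, Set.mem_union] at hα ⊢
    tauto
  by_cases h1 : ({α : Omega1 | ¬ (vertSection B α).Countable}).Countable
  · have h2 : ¬ ({α : Omega1 | ¬ (horSection B α).Countable}).Countable :=
      fun h2 => hunion (h1.union h2)
    intro hbis
    have h3 : ¬ ({α : Omega1 | ¬ (vertSection (Prod.swap ⁻¹' B) α).Countable}).Countable := by
      have heq : {α : Omega1 | ¬ (vertSection (Prod.swap ⁻¹' B) α).Countable} =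
          {α : Omega1 | ¬ (horSection B α).Countable} := rfl
      rw [heq]
      exact h2
    exact vertical_case _ h3 (bisequential_of_homeo (swapHomeo B) hbis)
  · exact vertical_case B h1

end
end

section
/- For every set B ⊆ ω₁ × ω₁, the space 𝒳_B is an Eberlein compactum: it is compact and there exist a Banach space E and a topological embedding of 𝒳_B into E equipped with its weak topology. In particular 𝒳 itself (the case B = ω₁ × ω₁) is an Eberlein compactum. -/
set_option maxHeartbeats 1000000
set_option synthInstance.maxHeartbeats 200000

open Cardinal Filter Topology Set

noncomputable section
open Classical

/-! ### Auxiliary lemmas -/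

lemma chi_eq_true {T : Type*} (A : Set T) (x : T) : chi A x = true ↔ x ∈ A := by
  by_cases h : x ∈ A <;> simp [chi, h]

/-- A set of pairs of countable ordinals satisfying the two pairwise conditions of a
decreasing graph is automatically finite. -/
lemma finite_of_pairwise {F : Set (Omega1 × Omega1)}
    (h1 : ∀ p ∈ F, ∀ q ∈ F, p.1 = q.1 → p = q)
    (h2 : ∀ p ∈ F, ∀ q ∈ F, p.1 < q.1 → q.2 < p.2) : F.Finite := by
  refine Set.not_infinite.1 fun h => ?_
  have hPWO : (Set.univ : Set Omega1).IsPWO :=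
    (Set.isWF_univ_iff.mpr inferInstance).isPWO
  have hA : F.PartiallyWellOrderedOn (Prod.fst ⁻¹'o (· ≤ · : Omega1 → Omega1 → Prop)) :=
    fun f => hPWO (fun n => ⟨(f n).1.1, Set.mem_univ _⟩)
  have hB : F.PartiallyWellOrderedOn (Prod.snd ⁻¹'o (· ≤ · : Omega1 → Omega1 → Prop)) :=
    fun f => hPWO (fun n => ⟨(f n).1.2, Set.mem_univ _⟩)
  obtain ⟨g, hg⟩ :=
    hA.exists_monotone_subseq (f := fun n => (h.natEmbedding _ n : Omega1 × Omega1))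
      fun n => (h.natEmbedding _ n).2
  obtain ⟨m, n, mn, hle⟩ :=
    hB (fun k => h.natEmbedding _ (g k))
  set p : Omega1 × Omega1 := (h.natEmbedding _ (g m) : Omega1 × Omega1) with hp
  set q : Omega1 × Omega1 := (h.natEmbedding _ (g n) : Omega1 × Omega1) with hq
  have hpF : p ∈ F := (h.natEmbedding _ (g m)).2
  have hqF : q ∈ F := (h.natEmbedding _ (g n)).2
  have hfst : p.1 ≤ q.1 := hg m n mn.le
  have hsnd : p.2 ≤ q.2 := hle
  rcases lt_or_eq_of_le hfst with hlt | heq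
  · exact absurd (h2 p hpF q hqF hlt) (not_lt.mpr hsnd)
  · have : p = q := h1 p hpF q hqF heq
    have hgmn : g m ≠ g n := fun hg' => mn.ne (g.injective hg')
    exact hgmn ((h.natEmbedding _).injective (Subtype.ext this))

/-- The closed-conditions description of `𝒳_B`. -/
lemma XSpaceIn_eq_iInter (B : Set (Omega1 × Omega1)) :
    XSpaceIn B = ⋂ (p : Omega1 × Omega1) (q : Omega1 × Omega1),
      (fun f : (Omega1 × Omega1) → Bool => (f p, f q)) ⁻¹'
        {z : Bool × Bool | (z.1 = true → p ∈ B) ∧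
          (z.1 = true → z.2 = true → (p.1 = q.1 → p = q) ∧ (p.1 < q.1 → q.2 < p.2))} := by
  ext f
  simp only [Set.mem_iInter, Set.mem_preimage, Set.mem_setOf_eq]
  constructor
  · rintro ⟨F, ⟨_, hs, hd⟩, hFB, rfl⟩ p q
    refine ⟨fun hp => hFB ((chi_eq_true F p).1 hp), fun hp hq => ?_⟩
    have hpF := (chi_eq_true F p).1 hp
    have hqF := (chi_eq_true F q).1 hq
    exact ⟨hs p hpF q hqF, hd p hpF q hqF⟩
  · intro hf
    refine ⟨{x | f x = true}, ⟨?_, ?_, ?_⟩, ?_, ?_⟩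
    · exact finite_of_pairwise (fun p hp q hq => ((hf p q).2 hp hq).1)
        (fun p hp q hq => ((hf p q).2 hp hq).2)
    · exact fun p hp q hq => ((hf p q).2 hp hq).1
    · exact fun p hp q hq => ((hf p q).2 hp hq).2
    · exact fun p hp => (hf p p).1 hp
    · funext x
      by_cases hx : f x = true
      · simp [chi, hx]
      · simp only [Bool.not_eq_true] at hx
        simp [chi, hx]

lemma XSpaceIn_isClosed (B : Set (Omega1 × Omega1)) : IsClosed (XSpaceIn B) := by
  rw [XSpaceIn_eq_iInter]
  exact isClosed_iInter fun p => isClosed_iInter fun q =>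
    (isClosed_discrete _).preimage ((continuous_apply p).prodMk (continuous_apply q))

instance : Fact ((1 : ENNReal) ≤ ⊤) := ⟨le_top⟩

instance : Nonempty Omega1 := by
  have h := Cardinal.ord_lt_ord.mpr (Cardinal.aleph_pos 1)
  rw [Cardinal.ord_zero] at h
  exact ⟨⟨0, h⟩⟩

/-- Coordinates of a finite sum of `lp.single`s at `p = ∞`. -/
lemma sum_single_apply (s : Finset (Omega1 × Omega1)) (c : (Omega1 × Omega1) → ℝ)
    (j : Omega1 × Omega1) :
    ((∑ i ∈ s, lp.single (E := fun _ : Omega1 × Omega1 => ℝ) ⊤ i (c i) :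
        lp (fun _ : Omega1 × Omega1 => ℝ) ⊤) : (Omega1 × Omega1) → ℝ) j
      = if j ∈ s then c j else 0 := by
  rw [lp.coeFn_sum, Finset.sum_apply]
  by_cases hj : j ∈ s
  · rw [Finset.sum_eq_single_of_mem j hj
      (fun b _ hbj => lp.single_apply_ne (E := fun _ : Omega1 × Omega1 => ℝ) ⊤ b _ (Ne.symm hbj)),
      lp.single_apply_self (E := fun _ : Omega1 × Omega1 => ℝ), if_pos hj]
  · rw [if_neg hj, Finset.sum_eq_zero]
    intro b hb
    exact lp.single_apply_ne (E := fun _ : Omega1 × Omega1 => ℝ) ⊤ b _ (fun h => hj (by rw [h]; exact hb))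

/-- The Banach space `ℓ^∞(ω₁ × ω₁)`. -/
abbrev ELP : Type 1 := ↥(lp (fun _ : Omega1 × Omega1 => ℝ) ⊤)

/-- Evaluation at a coordinate, as a continuous linear functional on `ℓ^∞`. -/
def evalCLM (i : Omega1 × Omega1) : ELP →L[ℝ] ℝ :=
  LinearMap.mkContinuous
    { toFun := fun f : ELP => (f : (Omega1 × Omega1) → ℝ) i
      map_add' := fun f g => by simpa using congrFun (lp.coeFn_add f g) i
      map_smul' := fun c f => by simpa using congrFun (lp.coeFn_smul c f) i } 1
    (fun f => by
      rw [one_mul]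
      exact lp.norm_apply_le_norm ENNReal.top_ne_zero f i)

lemma pairing_injective : Function.Injective ((topDualPairing ℝ ELP).flip) := by
  intro a b hab
  apply lp.ext
  funext i
  exact congrArg (fun ψ : (ELP →L[ℝ] ℝ) →ₗ[ℝ] ℝ => ψ (evalCLM i)) hab

/-- The natural map from `𝒳_B` to `ℓ^∞(ω₁ × ω₁)`. -/
def vmap {B : Set (Omega1 × Omega1)} (x : ↥(XSpaceIn B)) : ELP :=
  ⟨fun i => if (x : (Omega1 × Omega1) → Bool) i = true then (1:ℝ) else 0, by
    apply memℓp_infty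
    refine ⟨1, ?_⟩
    rintro r ⟨i, rfl⟩
    dsimp
    split <;> simp⟩

lemma vmap_apply {B : Set (Omega1 × Omega1)} (x : ↥(XSpaceIn B)) (i : Omega1 × Omega1) :
    (vmap x : (Omega1 × Omega1) → ℝ) i
      = if (x : (Omega1 × Omega1) → Bool) i = true then (1:ℝ) else 0 := rfl

lemma vmap_injective {B : Set (Omega1 × Omega1)} :
    Function.Injective (vmap (B := B)) := by
  intro x x' h
  apply Subtype.ext
  funext i
  have := congrArg (fun f : ELP => (f : (Omega1 × Omega1) → ℝ) i) h
  simp only [vmap_apply] at this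
  by_cases h1 : (x : (Omega1 × Omega1) → Bool) i = true <;>
    by_cases h2 : (x' : (Omega1 × Omega1) → Bool) i = true <;>
    simp [h1, h2] at this ⊢ <;> simp_all

lemma vmap_eq_sum {B : Set (Omega1 × Omega1)} (x : ↥(XSpaceIn B)) :
    ∃ s : Finset (Omega1 × Omega1),
      (∀ i, i ∈ s ↔ (x : (Omega1 × Omega1) → Bool) i = true) ∧
        vmap x = ∑ i ∈ s, lp.single ⊤ i (1:ℝ) := by
  obtain ⟨F, ⟨hfin, -, -⟩, -, hxF⟩ := x.2
  have hfin' : {i | (x : (Omega1 × Omega1) → Bool) i = true}.Finite := by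
    refine hfin.subset fun i hi => ?_
    have : chi F i = true := by rw [← hxF]; exact hi
    exact (chi_eq_true F i).1 this
  refine ⟨hfin'.toFinset, fun i => by simp [Set.Finite.mem_toFinset], ?_⟩
  apply lp.ext
  funext j
  rw [sum_single_apply hfin'.toFinset (fun _ => (1:ℝ)) j]
  simp only [vmap_apply, Set.Finite.mem_toFinset, Set.mem_setOf_eq]

/-- The `ℓ¹`-type bound on the coefficients of a functional on `ℓ^∞`. -/
lemma sum_abs_coeff_le (ℓ : ELP →L[ℝ] ℝ) (s : Finset (Omega1 × Omega1)) :
    ∑ i ∈ s, |ℓ (lp.single ⊤ i (1:ℝ))| ≤ ‖ℓ‖ := by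
  classical
  set y : (Omega1 × Omega1) → ℝ := fun i => ℓ (lp.single ⊤ i (1:ℝ)) with hy
  set c : (Omega1 × Omega1) → ℝ := fun i => if 0 ≤ y i then 1 else -1 with hc
  set u : ELP := ∑ i ∈ s, lp.single ⊤ i (c i) with hu
  have hunorm : ‖u‖ ≤ 1 := by
    rw [lp.norm_eq_ciSup]
    refine ciSup_le fun j => ?_
    rw [hu, sum_single_apply]
    by_cases hj : j ∈ s
    · rw [if_pos hj, hc]
      dsimp only
      split <;> simp
    · rw [if_neg hj]; simp
  have hlu : ℓ u = ∑ i ∈ s, |y i| := by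
    rw [hu, map_sum]
    refine Finset.sum_congr rfl fun i _ => ?_
    have h1 : lp.single (E := fun _ : Omega1 × Omega1 => ℝ) ⊤ i (c i)
        = c i • lp.single ⊤ i (1:ℝ) := by
      rw [← lp.single_smul]
      norm_num
    rw [h1, map_smul]
    rcases le_or_gt 0 (y i) with h | h
    · rw [hc]
      dsimp only
      rw [if_pos h, smul_eq_mul, one_mul, abs_of_nonneg h]
    · rw [hc]
      dsimp only
      rw [if_neg (not_le.mpr h), smul_eq_mul, neg_one_mul, abs_of_neg h]
  calc ∑ i ∈ s, |y i| = ℓ u := hlu.symm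
    _ ≤ ‖ℓ u‖ := le_abs_self _
    _ ≤ ‖ℓ‖ * ‖u‖ := ℓ.le_opNorm u
    _ ≤ ‖ℓ‖ * 1 := by
        have := ℓ.opNorm_nonneg
        nlinarith
    _ = ‖ℓ‖ := mul_one _

/-- Continuity of the natural map into the weak topology of `ℓ^∞`. -/
lemma vmap_weak_continuous (B : Set (Omega1 × Omega1)) :
    Continuous (fun x : ↥(XSpaceIn B) => toWeakSpace ℝ ELP (vmap x)) := by
  apply WeakBilin.continuous_of_continuous_eval
  intro ℓ
  set y : (Omega1 × Omega1) → ℝ := fun i => ℓ (lp.single ⊤ i (1:ℝ)) with hy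
  have hval : ∀ x : ↥(XSpaceIn B), ∃ s : Finset (Omega1 × Omega1),
      (∀ i, i ∈ s ↔ (x : (Omega1 × Omega1) → Bool) i = true) ∧
        (topDualPairing ℝ ELP).flip (toWeakSpace ℝ ELP (vmap x)) ℓ = ∑ i ∈ s, y i := by
    intro x
    obtain ⟨s, hs, hvx⟩ := vmap_eq_sum x
    refine ⟨s, hs, ?_⟩
    have h0 : (topDualPairing ℝ ELP).flip (toWeakSpace ℝ ELP (vmap x)) ℓ = ℓ (vmap x) := rfl
    rw [h0, hvx, map_sum]
  have hsummable : Summable fun i => |y i| :=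
    summable_of_sum_le (fun i => abs_nonneg _) (sum_abs_coeff_le ℓ)
  rw [continuous_iff_continuousAt]
  intro x₀
  rw [ContinuousAt, Metric.tendsto_nhds]
  intro ε hε
  set a : ℝ := ∑' i, |y i| with ha
  have htends : Filter.Tendsto (fun s : Finset (Omega1 × Omega1) => ∑ i ∈ s, |y i|)
      Filter.atTop (nhds a) := hsummable.hasSum
  have hδ : (0:ℝ) < ε / 5 := by linarith
  obtain ⟨S, hS⟩ := Filter.eventually_atTop.mp
    (htends.eventually (Metric.ball_mem_nhds a hδ))
  have htail : ∀ t : Finset (Omega1 × Omega1), (∀ i ∈ t, i ∉ S) →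
      ∑ i ∈ t, |y i| ≤ 2 * (ε / 5) := by
    intro t ht
    have h1 := hS (S ∪ t) Finset.subset_union_left
    have h2 := hS S le_rfl
    rw [Real.dist_eq] at h1 h2
    have hdisj : Disjoint S t := by
      rw [Finset.disjoint_right]
      exact fun i hit hiS => ht i hit hiS
    have hsplit : ∑ i ∈ S ∪ t, |y i| = ∑ i ∈ S, |y i| + ∑ i ∈ t, |y i| :=
      Finset.sum_union hdisj
    have e1 : ∑ i ∈ S ∪ t, |y i| - a < ε / 5 := (abs_lt.mp h1).2
    have e2 : a - ∑ i ∈ S, |y i| < ε / 5 := by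
      have := (abs_lt.mp h2).1
      linarith
    linarith
  have hU : IsOpen {x : ↥(XSpaceIn B) |
      ∀ i ∈ S, (x : (Omega1 × Omega1) → Bool) i = (x₀ : (Omega1 × Omega1) → Bool) i} := by
    have heq : {x : ↥(XSpaceIn B) |
        ∀ i ∈ S, (x : (Omega1 × Omega1) → Bool) i = (x₀ : (Omega1 × Omega1) → Bool) i}
        = ⋂ i ∈ S, (fun x : ↥(XSpaceIn B) => (x : (Omega1 × Omega1) → Bool) i) ⁻¹'
            {(x₀ : (Omega1 × Omega1) → Bool) i} := by
      ext x; simp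
    rw [heq]
    refine isOpen_biInter_finset fun i _ => ?_
    exact (isOpen_discrete _).preimage ((continuous_apply i).comp continuous_subtype_val)
  have hmem : x₀ ∈ {x : ↥(XSpaceIn B) |
      ∀ i ∈ S, (x : (Omega1 × Omega1) → Bool) i = (x₀ : (Omega1 × Omega1) → Bool) i} :=
    fun _ _ => rfl
  filter_upwards [hU.mem_nhds hmem] with x hx
  obtain ⟨s, hschar, hsval⟩ := hval x
  obtain ⟨s₀, hs₀char, hs₀val⟩ := hval x₀
  rw [Real.dist_eq, hsval, hs₀val]
  have hinter : s ∩ S = s₀ ∩ S := by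
    ext i
    simp only [Finset.mem_inter, hschar, hs₀char]
    constructor
    · rintro ⟨h1, h2⟩; exact ⟨by rw [← hx i h2]; exact h1, h2⟩
    · rintro ⟨h1, h2⟩; exact ⟨by rw [hx i h2]; exact h1, h2⟩
  have hsplit : ∀ t : Finset (Omega1 × Omega1),
      ∑ i ∈ t, y i = ∑ i ∈ t \ S, y i + ∑ i ∈ t ∩ S, y i := by
    intro t
    rw [← Finset.sum_union (Finset.disjoint_sdiff_inter t S), Finset.sdiff_union_inter]
  rw [hsplit s, hsplit s₀, hinter]
  have hring : (∑ i ∈ s \ S, y i + ∑ i ∈ s₀ ∩ S, y i)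
      - (∑ i ∈ s₀ \ S, y i + ∑ i ∈ s₀ ∩ S, y i)
      = ∑ i ∈ s \ S, y i - ∑ i ∈ s₀ \ S, y i := by ring
  rw [hring]
  have h1 : |∑ i ∈ s \ S, y i| ≤ 2 * (ε / 5) := by
    refine le_trans (Finset.abs_sum_le_sum_abs _ _) ?_
    exact htail _ fun i hi => (Finset.mem_sdiff.mp hi).2
  have h2 : |∑ i ∈ s₀ \ S, y i| ≤ 2 * (ε / 5) := by
    refine le_trans (Finset.abs_sum_le_sum_abs _ _) ?_
    exact htail _ fun i hi => (Finset.mem_sdiff.mp hi).2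
  have habs : ∀ u w : ℝ, |u - w| ≤ |u| + |w| := fun u w => by
    calc |u - w| = |u + -w| := by ring_nf
      _ ≤ |u| + |-w| := abs_add_le _ _
      _ = |u| + |w| := by rw [abs_neg]
  calc |∑ i ∈ s \ S, y i - ∑ i ∈ s₀ \ S, y i|
      ≤ |∑ i ∈ s \ S, y i| + |∑ i ∈ s₀ \ S, y i| := habs _ _
    _ ≤ 2 * (ε / 5) + 2 * (ε / 5) := add_le_add h1 h2
    _ < ε := by linarith

/-- For every `B ⊆ ω₁ × ω₁`, the space `𝒳_B` is an Eberlein compactum: it is compact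
and embeds topologically into some Banach space `E` equipped with its weak topology.
The case `B = univ` gives that `𝒳` itself is an Eberlein compactum. -/
theorem XSpaceIn_isEberlein (B : Set (Omega1 × Omega1)) :
    IsCompact (XSpaceIn B) ∧
    ∃ (E : Type 1) (instE : NormedAddCommGroup E),
      letI := instE
      ∃ (instN : NormedSpace ℝ E),
        letI := instN
        ∃ (_ : CompleteSpace E) (φ : ↥(XSpaceIn B) → WeakSpace ℝ E),
          IsEmbedding φ := by
  have hcompact : IsCompact (XSpaceIn B) := (XSpaceIn_isClosed B).isCompact
  refine ⟨hcompact, ELP, inferInstance, inferInstance, inferInstance, ?_⟩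
  haveI : CompactSpace ↥(XSpaceIn B) := isCompact_iff_compactSpace.mp hcompact
  haveI hT2 : T2Space (WeakSpace ℝ ELP) := (WeakBilin.isEmbedding pairing_injective).t2Space
  refine ⟨fun x => toWeakSpace ℝ ELP (vmap x), ?_⟩
  have hinj : Function.Injective (fun x : ↥(XSpaceIn B) => toWeakSpace ℝ ELP (vmap x)) :=
    fun x x' h => vmap_injective ((toWeakSpace ℝ ELP).injective h)
  exact ((vmap_weak_continuous B).isClosedEmbedding hinj).isEmbedding

end
end
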